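/- arXiv:1708.06540 — 2 statements merged into one kernel-verified Lean document; each statement's English description precedes it below -/
import Mathlib

section
/- Let 𝕊ₖ be a random walk with i.i.d. steps satisfying λ(α₀) = 𝔼[e^{α₀ X}] < ∞ and λ(β) = 𝔼[e^{β X}] < ∞ for some 0 < α₀ < β. Then for all real u, v and integers n > L ≥ 1: ℙ[𝕊_{n−L} ≤ u − v, 𝕊ₙ > u] ≤ ∑_{m=0}^{∞} λ(α₀)^{n−L} e^{−α₀(u − v) + α₀(m+1)} · λ(β)^{L} e^{−β v − β m}, which equals λ(α₀)^{n−L} λ(β)^{L} e^{−α₀ u} e^{(α₀−β)v} · e^{α₀}/(1 − e^{α₀−β}). -/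
set_option autoImplicit false

open MeasureTheory ProbabilityTheory Finset

/-- Shell decomposition bound for a random walk with i.i.d. steps having finite exponential
moments at `0 < α₀ < β`: for all `u, v` and integers `n > L ≥ 1`,
`ℙ[𝕊_{n−L} ≤ u−v, 𝕊ₙ > u] ≤ ∑_{m≥0} λ(α₀)^{n−L} e^{−α₀(u−v)+α₀(m+1)} λ(β)^L e^{−βv−βm}`,
and the right-hand side equals
`λ(α₀)^{n−L} λ(β)^L e^{−α₀u} e^{(α₀−β)v} e^{α₀}/(1 − e^{α₀−β})`. -/
theorem walk_shell_decomposition_bound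
    {Ω : Type*} [MeasurableSpace Ω] (μ : Measure Ω) [IsProbabilityMeasure μ]
    (X : ℕ → Ω → ℝ) (hmeas : ∀ i, Measurable (X i))
    (hindep : iIndepFun X μ)
    (hident : ∀ i, IdentDistrib (X i) (X 0) μ μ)
    (α₀ β : ℝ) (hα₀ : 0 < α₀) (hβ : α₀ < β)
    (hintα : Integrable (fun ω => Real.exp (α₀ * X 0 ω)) μ)
    (hintβ : Integrable (fun ω => Real.exp (β * X 0 ω)) μ)
    (u v : ℝ) (n L : ℕ) (hL : 1 ≤ L) (hnL : L < n) :
    (μ {ω | ∑ i ∈ Finset.range (n - L), X i ω ≤ u - v ∧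
          u < ∑ i ∈ Finset.range n, X i ω}).toReal ≤
      (∑' m : ℕ, (∫ ω, Real.exp (α₀ * X 0 ω) ∂μ) ^ (n - L) *
          Real.exp (-α₀ * (u - v) + α₀ * (m + 1)) *
          ((∫ ω, Real.exp (β * X 0 ω) ∂μ) ^ L * Real.exp (-β * v - β * m))) ∧
    (∑' m : ℕ, (∫ ω, Real.exp (α₀ * X 0 ω) ∂μ) ^ (n - L) *
          Real.exp (-α₀ * (u - v) + α₀ * (m + 1)) *
          ((∫ ω, Real.exp (β * X 0 ω) ∂μ) ^ L * Real.exp (-β * v - β * m))) =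
      (∫ ω, Real.exp (α₀ * X 0 ω) ∂μ) ^ (n - L) * (∫ ω, Real.exp (β * X 0 ω) ∂μ) ^ L *
        Real.exp (-α₀ * u) * Real.exp ((α₀ - β) * v) *
        (Real.exp α₀ / (1 - Real.exp (α₀ - β))) := by
  set lα : ℝ := ∫ ω, Real.exp (α₀ * X 0 ω) ∂μ with hlα
  set lβ : ℝ := ∫ ω, Real.exp (β * X 0 ω) ∂μ with hlβ
  set c : ℕ → ℝ := fun m => lα ^ (n - L) * Real.exp (-α₀ * (u - v) + α₀ * (m + 1)) *
      (lβ ^ L * Real.exp (-β * v - β * m)) with hc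
  have hlα0 : 0 ≤ lα := integral_nonneg fun ω => (Real.exp_pos _).le
  have hlβ0 : 0 ≤ lβ := integral_nonneg fun ω => (Real.exp_pos _).le
  set r : ℝ := Real.exp (α₀ - β) with hrdef
  have hr0 : 0 ≤ r := (Real.exp_pos _).le
  have hr1 : r < 1 := Real.exp_lt_one_iff.mpr (by linarith)
  set K : ℝ := lα ^ (n - L) * lβ ^ L * Real.exp (-α₀ * (u - v) + α₀) * Real.exp (-β * v)
    with hKdef
  have hcK : ∀ m : ℕ, c m = K * r ^ m := by
    intro m
    have h1 : Real.exp (-α₀ * (u - v) + α₀ * (m + 1)) =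
        Real.exp (-α₀ * (u - v) + α₀) * Real.exp (α₀ * m) := by
      rw [← Real.exp_add]; congr 1; ring
    have h2 : Real.exp (-β * v - β * m) = Real.exp (-β * v) * Real.exp (-β * m) := by
      rw [← Real.exp_add]; congr 1; ring
    have h3 : Real.exp (α₀ * m) * Real.exp (-β * m) = r ^ m := by
      rw [← Real.exp_add, hrdef, ← Real.exp_nat_mul]; congr 1; ring
    rw [hc]
    simp only []
    rw [h1, h2, hKdef, ← h3]; ring
  have hc0 : ∀ m : ℕ, 0 ≤ c m :=
    fun m => mul_nonneg (mul_nonneg (pow_nonneg hlα0 _) (Real.exp_pos _).le)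
      (mul_nonneg (pow_nonneg hlβ0 _) (Real.exp_pos _).le)
  have hcsum : Summable c := by
    rw [show c = fun m => K * r ^ m from funext hcK]
    exact (summable_geometric_of_lt_one hr0 hr1).mul_left K
  -- integrability and mgf identities for each X i
  have hintα' : ∀ i, Integrable (fun ω => Real.exp (α₀ * X i ω)) μ := fun i =>
    ((hident i).comp (by fun_prop : Measurable fun x : ℝ => Real.exp (α₀ * x))).integrable_iff.mpr
      hintα
  have hintβ' : ∀ i, Integrable (fun ω => Real.exp (β * X i ω)) μ := fun i =>
    ((hident i).comp (by fun_prop : Measurable fun x : ℝ => Real.exp (β * x))).integrable_iff.mpr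
      hintβ
  have hmgfα : ∀ i, mgf (X i) μ α₀ = lα := fun i =>
    ((hident i).comp (by fun_prop : Measurable fun x : ℝ => Real.exp (α₀ * x))).integral_eq
  have hmgfβ : ∀ i, mgf (X i) μ β = lβ := fun i =>
    ((hident i).comp (by fun_prop : Measurable fun x : ℝ => Real.exp (β * x))).integral_eq
  -- Chernoff bound for sums over arbitrary finsets
  have chern : ∀ (t : ℝ), 0 ≤ t → ∀ (lam : ℝ), (∀ i, mgf (X i) μ t = lam) →
      (∀ i, Integrable (fun ω => Real.exp (t * X i ω)) μ) → ∀ (s : Finset ℕ) (a : ℝ),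
      (μ {ω | a ≤ ∑ i ∈ s, X i ω}).toReal ≤ Real.exp (-t * a) * lam ^ s.card := by
    intro t ht lam hlam hint s a
    have hint' : Integrable (fun ω => Real.exp (t * (∑ i ∈ s, X i) ω)) μ :=
      hindep.integrable_exp_mul_sum hmeas fun i _ => hint i
    have h := measure_ge_le_exp_mul_mgf (X := ∑ i ∈ s, X i) (μ := μ) a ht hint'
    rw [hindep.mgf_sum hmeas s] at h
    have hprod : ∏ i ∈ s, mgf (X i) μ t = lam ^ s.card := by
      rw [Finset.prod_congr rfl fun i _ => hlam i, Finset.prod_const]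
    rw [hprod] at h
    simpa only [Finset.sum_apply, measureReal_def] using h
  have hSbound : ∀ a : ℝ, (μ {ω | a ≤ ∑ i ∈ Finset.range (n - L), X i ω}).toReal ≤
      Real.exp (-α₀ * a) * lα ^ (n - L) := by
    intro a
    simpa [Finset.card_range] using chern α₀ hα₀.le lα hmgfα hintα' (Finset.range (n - L)) a
  have hTbound : ∀ b : ℝ, (μ {ω | b ≤ ∑ i ∈ Finset.Ico (n - L) n, X i ω}).toReal ≤
      Real.exp (-β * b) * lβ ^ L := by
    intro b
    have hcard : (Finset.Ico (n - L) n).card = L := by rw [Nat.card_Ico]; omega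
    simpa [hcard] using chern β (by linarith) lβ hmgfβ hintβ' (Finset.Ico (n - L) n) b
  -- Independence of the two partial sums
  have hdisj : Disjoint (Finset.range (n - L)) (Finset.Ico (n - L) n) := by
    rw [Finset.range_eq_Ico]
    exact Finset.Ico_disjoint_Ico_consecutive 0 (n - L) n
  have hindST : IndepFun (fun ω => ∑ i ∈ Finset.range (n - L), X i ω)
      (fun ω => ∑ i ∈ Finset.Ico (n - L) n, X i ω) μ := by
    have hφ : Measurable fun v : (Finset.range (n - L) : Finset ℕ) → ℝ => ∑ i, v i := by
      exact Finset.univ.measurable_sum fun i _ => measurable_pi_apply i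
    have hψ : Measurable fun v : (Finset.Ico (n - L) n : Finset ℕ) → ℝ => ∑ i, v i := by
      exact Finset.univ.measurable_sum fun i _ => measurable_pi_apply i
    have h := (hindep.indepFun_finset (Finset.range (n - L)) (Finset.Ico (n - L) n) hdisj
      hmeas).comp hφ hψ
    have e1 : ((fun v : (Finset.range (n - L) : Finset ℕ) → ℝ => ∑ i, v i) ∘
        fun ω (i : (Finset.range (n - L) : Finset ℕ)) => X i ω) =
        fun ω => ∑ i ∈ Finset.range (n - L), X i ω := by
      funext ω
      exact Finset.sum_coe_sort _ fun i => X i ω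
    have e2 : ((fun v : (Finset.Ico (n - L) n : Finset ℕ) → ℝ => ∑ i, v i) ∘
        fun ω (i : (Finset.Ico (n - L) n : Finset ℕ)) => X i ω) =
        fun ω => ∑ i ∈ Finset.Ico (n - L) n, X i ω := by
      funext ω
      exact Finset.sum_coe_sort _ fun i => X i ω
    rwa [e1, e2] at h
  -- Shell sets
  set S : Ω → ℝ := fun ω => ∑ i ∈ Finset.range (n - L), X i ω with hSdef
  set T : Ω → ℝ := fun ω => ∑ i ∈ Finset.Ico (n - L) n, X i ω with hTdef
  set A : ℕ → Set Ω := fun m => S ⁻¹' Set.Ici (u - v - (m + 1)) with hAdef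
  set B : ℕ → Set Ω := fun m => T ⁻¹' Set.Ici (v + m) with hBdef
  have hsplit : ∀ ω, S ω + T ω = ∑ i ∈ Finset.range n, X i ω := fun ω =>
    Finset.sum_range_add_sum_Ico _ (by omega)
  have hsub : {ω | ∑ i ∈ Finset.range (n - L), X i ω ≤ u - v ∧
      u < ∑ i ∈ Finset.range n, X i ω} ⊆ ⋃ m : ℕ, A m ∩ B m := by
    intro ω hω
    obtain ⟨h1, h2⟩ := hω
    have h1' : S ω ≤ u - v := h1
    set m : ℕ := ⌊u - v - S ω⌋₊ with hm
    have h0 : 0 ≤ u - v - S ω := by linarith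
    have hm1 : (m : ℝ) ≤ u - v - S ω := Nat.floor_le h0
    have hm2 : u - v - S ω < m + 1 := Nat.lt_floor_add_one _
    refine Set.mem_iUnion.2 ⟨m, ?_, ?_⟩
    · show u - v - (m + 1) ≤ S ω
      linarith
    · show v + m ≤ T ω
      have := hsplit ω
      linarith
  have hterm : ∀ m : ℕ, μ (A m ∩ B m) ≤ ENNReal.ofReal (c m) := by
    intro m
    have hmul : μ (A m ∩ B m) = μ (A m) * μ (B m) :=
      hindST.measure_inter_preimage_eq_mul _ _ measurableSet_Ici measurableSet_Ici
    rw [hmul, ENNReal.le_ofReal_iff_toReal_le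
      (ENNReal.mul_ne_top (measure_ne_top μ _) (measure_ne_top μ _)) (hc0 m),
      ENNReal.toReal_mul]
    have h1 : (μ (A m)).toReal ≤ Real.exp (-α₀ * (u - v - (m + 1))) * lα ^ (n - L) :=
      hSbound (u - v - (m + 1))
    have h2 : (μ (B m)).toReal ≤ Real.exp (-β * (v + m)) * lβ ^ L :=
      hTbound (v + m)
    calc (μ (A m)).toReal * (μ (B m)).toReal
        ≤ (Real.exp (-α₀ * (u - v - (m + 1))) * lα ^ (n - L)) *
          (Real.exp (-β * (v + m)) * lβ ^ L) :=
          mul_le_mul h1 h2 ENNReal.toReal_nonneg (le_trans ENNReal.toReal_nonneg h1)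
      _ = c m := by
          rw [hc]
          simp only []
          rw [show -α₀ * (u - v - ((m : ℝ) + 1)) = -α₀ * (u - v) + α₀ * ((m : ℝ) + 1) by ring,
            show -β * (v + (m : ℝ)) = -β * v - β * (m : ℝ) by ring]
          ring
  have hμE : μ {ω | ∑ i ∈ Finset.range (n - L), X i ω ≤ u - v ∧
      u < ∑ i ∈ Finset.range n, X i ω} ≤ ENNReal.ofReal (∑' m, c m) := by
    calc μ {ω | ∑ i ∈ Finset.range (n - L), X i ω ≤ u - v ∧
          u < ∑ i ∈ Finset.range n, X i ω}
        ≤ μ (⋃ m : ℕ, A m ∩ B m) := measure_mono hsub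
      _ ≤ ∑' m : ℕ, μ (A m ∩ B m) := measure_iUnion_le _
      _ ≤ ∑' m : ℕ, ENNReal.ofReal (c m) := ENNReal.tsum_le_tsum hterm
      _ = ENNReal.ofReal (∑' m, c m) := (ENNReal.ofReal_tsum_of_nonneg hc0 hcsum).symm
  constructor
  · exact ENNReal.toReal_le_of_le_ofReal (tsum_nonneg hc0) hμE
  · calc (∑' m : ℕ, c m) = ∑' m : ℕ, K * r ^ m := tsum_congr hcK
      _ = K * (1 - r)⁻¹ := by rw [tsum_mul_left, tsum_geometric_of_lt_one hr0 hr1]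
      _ = lα ^ (n - L) * lβ ^ L * Real.exp (-α₀ * u) * Real.exp ((α₀ - β) * v) *
          (Real.exp α₀ / (1 - r)) := by
          have hexp : Real.exp (-α₀ * (u - v) + α₀) * Real.exp (-β * v) =
              Real.exp (-α₀ * u) * Real.exp ((α₀ - β) * v) * Real.exp α₀ := by
            rw [← Real.exp_add, ← Real.exp_add, ← Real.exp_add]
            congr 1; ring
          rw [hKdef, div_eq_mul_inv, mul_assoc (lα ^ (n - L) * lβ ^ L), hexp]
          ring
end

section
/- Branching random walk LLN-type upper bound: let the displacement X satisfy ψ(s) := N 𝔼[e^{sX}] with ψ(α₀) = 1 for some α₀ > 0 and ψ finite in a neighbourhood of α₀, ρ₀ = Ψ'(α₀) > 0 where Ψ = log ψ. Set n_u = u/ρ₀. For every δ > 0 there exist b, C > 0 such that for all large u, ℙ[τ_u ≤ n_u − b√(n_u log n_u)] ≤ C e^{−α₀ u} u^{−δ}, where τ_u is the first generation at which some particle of the branching random walk exceeds level u. -/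
set_option autoImplicit false
set_option maxHeartbeats 1000000

open MeasureTheory ProbabilityTheory Finset

section Aux

/-- Elementary quadratic bound for the exponential. -/
private lemma exp_quad_bound (y : ℝ) : Real.exp y ≤ 1 + y + y ^ 2 * Real.exp |y| := by
  rcases le_or_gt 0 y with hy | hy
  · rw [abs_of_nonneg hy]
    have h0 : Real.exp (-y) * Real.exp y = 1 := by rw [← Real.exp_add]; simp
    have h1 : -y + 1 ≤ Real.exp (-y) := Real.add_one_le_exp (-y)
    have h2 : Real.exp y - 1 ≤ y * Real.exp y := by nlinarith [Real.exp_pos y]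
    have h3 : y + 1 ≤ Real.exp y := Real.add_one_le_exp y
    nlinarith [Real.exp_pos y]
  · rw [abs_of_neg hy]
    have h0 : Real.exp (-y) * Real.exp y = 1 := by rw [← Real.exp_add]; simp
    have h1 : -y + 1 ≤ Real.exp (-y) := Real.add_one_le_exp (-y)
    have hE : (1 : ℝ) ≤ Real.exp (-y) := Real.one_le_exp (by linarith)
    -- (1 + y + y² E)(1 - y) ≥ 1 ≥ e^y (1 - y)
    have h2 : Real.exp y * (1 - y) ≤ 1 := by nlinarith [Real.exp_pos y]
    have h3 : (1 : ℝ) ≤ (1 + y + y ^ 2 * Real.exp (-y)) * (1 - y) := by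
      nlinarith [sq_nonneg y, mul_nonneg (sq_nonneg y) (Real.exp_pos (-y)).le]
    nlinarith [Real.exp_pos y]

/-- Two-sided quadratic bound. -/
private lemma abs_exp_sub_one_sub_le (y : ℝ) :
    |Real.exp y - 1 - y| ≤ y ^ 2 * Real.exp |y| := by
  have h1 : 0 ≤ Real.exp y - 1 - y := by linarith [Real.add_one_le_exp y]
  rw [abs_of_nonneg h1]
  linarith [exp_quad_bound y]

/-- `x² ≤ (4/c²) e^{c x}` for `x ≥ 0`, `c > 0`. -/
private lemma sq_le_exp_aux {c x : ℝ} (hc : 0 < c) (hx : 0 ≤ x) :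
    x ^ 2 ≤ 4 / c ^ 2 * Real.exp (c * x) := by
  have h1 : c / 2 * x ≤ Real.exp (c / 2 * x) := by
    linarith [Real.add_one_le_exp (c / 2 * x), Real.exp_pos (c / 2 * x)]
  have h2 : x ≤ 2 / c * Real.exp (c / 2 * x) := by
    rw [div_mul_eq_mul_div, le_div_iff₀ hc]
    calc x * c = 2 * (c / 2 * x) := by ring
      _ ≤ 2 * Real.exp (c / 2 * x) := by linarith
  have h3 : x ^ 2 ≤ (2 / c * Real.exp (c / 2 * x)) ^ 2 := by
    apply pow_le_pow_left₀ hx h2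
  have h4 : Real.exp (c / 2 * x) ^ 2 = Real.exp (c * x) := by
    rw [← Real.exp_nat_mul]
    congr 1
    push_cast
    ring
  calc x ^ 2 ≤ (2 / c * Real.exp (c / 2 * x)) ^ 2 := h3
    _ = 4 / c ^ 2 * Real.exp (c * x) := by rw [mul_pow, h4]; ring

/-- Precomposition of an independent family with an injective map. -/
private lemma iIndepFun_precomp {Ω ι κ : Type*} {mΩ : MeasurableSpace Ω} {μ : Measure Ω}
    {β : Type*} {mβ : MeasurableSpace β} {f : ι → Ω → β}
    (hf : iIndepFun f μ) {g : κ → ι} (hg : Function.Injective g) :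
    iIndepFun (fun k => f (g k)) μ := by
  rw [iIndepFun_iff_measure_inter_preimage_eq_mul] at hf ⊢
  intro S sets hsets
  classical
  rcases S.eq_empty_or_nonempty with rfl | hS
  · simpa using hf (∅ : Finset ι) (sets := fun _ => Set.univ) (by simp)
  have hne : Nonempty κ := ⟨hS.choose⟩
  have hinv : ∀ k, Function.invFun g (g k) = k := fun k =>
    Function.leftInverse_invFun hg k
  set sets' : ι → Set β := fun j => sets (Function.invFun g j) with hsets'
  have h1 : (⋂ k ∈ S, f (g k) ⁻¹' sets k) = ⋂ j ∈ S.image g, f j ⁻¹' sets' j := by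
    ext ω
    simp only [Set.mem_iInter, Finset.mem_image]
    constructor
    · rintro h j ⟨k, hk, rfl⟩
      simpa [hsets', hinv k] using h k hk
    · intro h k hk
      simpa [hsets', hinv k] using h (g k) ⟨k, hk, rfl⟩
  have h2 : μ (⋂ j ∈ S.image g, f j ⁻¹' sets' j)
      = ∏ j ∈ S.image g, μ (f j ⁻¹' sets' j) := by
    refine hf (S.image g) ?_
    intro j hj
    obtain ⟨k, hk, rfl⟩ := Finset.mem_image.1 hj
    simpa [hsets', hinv k] using hsets k hk
  rw [h1, h2, Finset.prod_image (fun a _ b _ h => hg h)]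
  refine Finset.prod_congr rfl fun k hk => ?_
  simp [hsets', hinv k]

end Aux

/-- LLN-type upper bound for the branching random walk first passage time: with
`ψ(s) = N 𝔼[e^{sX}]`, `ψ(α₀) = 1`, `Ψ = log ψ` finite near `α₀`, `ρ₀ = Ψ'(α₀) > 0` and
`n_u = u/ρ₀`: for every `δ > 0` there are `b, C > 0` such that for all large `u`,
`ℙ[τ_u ≤ n_u − b√(n_u log n_u)] ≤ C e^{−α₀ u} u^{−δ}`. -/
theorem brw_first_passage_early_crossing_bound
    {Ω : Type*} [MeasurableSpace Ω] (μ : Measure Ω) [IsProbabilityMeasure μ]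
    (N : ℕ) (hN : 1 ≤ N)
    (X : List (Fin N) → Ω → ℝ) (hXmeas : ∀ γ, Measurable (X γ))
    (hXindep : iIndepFun X μ)
    (hXident : ∀ γ, IdentDistrib (X γ) (X []) μ μ)
    (S : List (Fin N) → Ω → ℝ)
    (hS : ∀ γ ω, S γ ω = ∑ k ∈ Finset.range γ.length, X (γ.take (k + 1)) ω)
    (hdrift : ∫ ω, X [] ω ∂μ < 0)
    (α₀ : ℝ) (hα₀ : 0 < α₀)
    (ε₀ : ℝ) (hε₀ : 0 < ε₀)
    (hintε : Integrable (fun ω => Real.exp ((α₀ + ε₀) * X [] ω)) μ)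
    (hψ1 : (N : ℝ) * ∫ ω, Real.exp (α₀ * X [] ω) ∂μ = 1)
    (ρ₀ : ℝ)
    (hρ₀ : HasDerivAt (fun s => Real.log ((N : ℝ) * ∫ ω, Real.exp (s * X [] ω) ∂μ)) ρ₀ α₀)
    (hρ₀pos : 0 < ρ₀) :
    ∀ δ > (0 : ℝ), ∃ b > (0 : ℝ), ∃ C > (0 : ℝ), ∃ u₀ : ℝ, ∀ u ≥ u₀,
      (μ {ω | ∃ γ : List (Fin N), 1 ≤ γ.length ∧
          (γ.length : ℝ) ≤ u / ρ₀ - b * Real.sqrt (u / ρ₀ * Real.log (u / ρ₀)) ∧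
          u < S γ ω}).toReal ≤
        C * Real.exp (-α₀ * u) * u ^ (-δ) := by
  intro δ hδ
  classical
  have hNpos : (0 : ℝ) < N := by exact_mod_cast Nat.lt_of_lt_of_le Nat.zero_lt_one hN
  -- integrability of `exp (c • X)` for `c ∈ [0, α₀ + ε₀]`
  have hint : ∀ c : ℝ, 0 ≤ c → c ≤ α₀ + ε₀ →
      Integrable (fun ω => Real.exp (c * X [] ω)) μ := by
    intro c hc0 hc1
    refine ((integrable_const (1 : ℝ)).add hintε).mono
      (((hXmeas []).const_mul c).exp).aestronglyMeasurable ?_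
    filter_upwards with ω
    simp only [Pi.add_apply]
    have hxpos : 0 < Real.exp ((α₀ + ε₀) * X [] ω) := Real.exp_pos _
    have e1 : ‖Real.exp (c * X [] ω)‖ = Real.exp (c * X [] ω) :=
      abs_of_pos (Real.exp_pos _)
    have e2 : ‖(1 : ℝ) + Real.exp ((α₀ + ε₀) * X [] ω)‖
        = 1 + Real.exp ((α₀ + ε₀) * X [] ω) := abs_of_pos (by linarith)
    rw [e1, e2]
    rcases le_or_gt 0 (X [] ω) with hx | hx
    · have h := Real.exp_le_exp.2 (mul_le_mul_of_nonneg_right hc1 hx)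
      linarith
    · have h : Real.exp (c * X [] ω) ≤ 1 :=
        Real.exp_le_one_iff.2 (mul_nonpos_iff.2 (Or.inl ⟨hc0, hx.le⟩))
      linarith
  set θ₁ : ℝ := min α₀ ε₀ / 2 with hθ₁def
  have hθ₁pos : 0 < θ₁ := by
    have := lt_min hα₀ hε₀
    simp only [hθ₁def]
    linarith
  have hθ₁α : θ₁ ≤ α₀ / 2 := by
    have := min_le_left α₀ ε₀
    simp only [hθ₁def]; linarith
  have hθ₁ε : θ₁ ≤ ε₀ / 2 := by
    have := min_le_right α₀ ε₀
    simp only [hθ₁def]; linarith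
  -- integrability of the dominating functions
  have hGint : Integrable (fun ω => Real.exp (α₀ * X [] ω + θ₁ * |X [] ω|)) μ := by
    refine ((integrable_const (1 : ℝ)).add
        (hint (α₀ + θ₁) (by linarith) (by linarith))).mono
      ((((hXmeas []).const_mul α₀).add (((hXmeas []).abs).const_mul θ₁)).exp).aestronglyMeasurable
      ?_
    filter_upwards with ω
    simp only [Pi.add_apply]
    have hxpos : 0 < Real.exp ((α₀ + θ₁) * X [] ω) := Real.exp_pos _
    have e1 : ‖Real.exp (α₀ * X [] ω + θ₁ * |X [] ω|)‖
        = Real.exp (α₀ * X [] ω + θ₁ * |X [] ω|) := abs_of_pos (Real.exp_pos _)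
    have e2 : ‖(1 : ℝ) + Real.exp ((α₀ + θ₁) * X [] ω)‖
        = 1 + Real.exp ((α₀ + θ₁) * X [] ω) := abs_of_pos (by linarith)
    rw [e1, e2]
    rcases le_or_gt 0 (X [] ω) with hx | hx
    · have heq : α₀ * X [] ω + θ₁ * |X [] ω| = (α₀ + θ₁) * X [] ω := by
        rw [abs_of_nonneg hx]; ring
      rw [heq]; linarith
    · have h1 : α₀ * X [] ω + θ₁ * |X [] ω| ≤ 0 := by
        rw [abs_of_neg hx]; nlinarith
      have := Real.exp_le_one_iff.2 h1
      linarith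
  have hQint : Integrable
      (fun ω => (X [] ω) ^ 2 * Real.exp (α₀ * X [] ω + θ₁ * |X [] ω|)) μ := by
    set d : ℝ := α₀ - θ₁ with hddef
    have hdpos : 0 < d := by simp only [hddef]; linarith
    set Cq : ℝ := 4 / θ₁ ^ 2 + 4 / d ^ 2 with hCqdef
    have hCq1 : 0 ≤ 4 / θ₁ ^ 2 := by positivity
    have hCq2 : 0 ≤ 4 / d ^ 2 := by positivity
    refine (((integrable_const (1 : ℝ)).add (hint (α₀ + ε₀) (by linarith) le_rfl)).const_mul
        Cq).mono
      ((((hXmeas []).pow_const 2).mul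
        ((((hXmeas []).const_mul α₀).add (((hXmeas []).abs).const_mul θ₁)).exp)).aestronglyMeasurable)
      ?_
    filter_upwards with ω
    simp only [Pi.add_apply]
    set x := X [] ω with hxdef
    have hF : 0 < Real.exp ((α₀ + ε₀) * x) := Real.exp_pos _
    have hnn : 0 ≤ x ^ 2 * Real.exp (α₀ * x + θ₁ * |x|) := by positivity
    have e1 : ‖x ^ 2 * Real.exp (α₀ * x + θ₁ * |x|)‖
        = x ^ 2 * Real.exp (α₀ * x + θ₁ * |x|) := abs_of_nonneg hnn
    have e2 : ‖Cq * ((1 : ℝ) + Real.exp ((α₀ + ε₀) * x))‖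
        = Cq * (1 + Real.exp ((α₀ + ε₀) * x)) := by
      apply abs_of_nonneg
      have : (0:ℝ) ≤ Cq := by simp only [hCqdef]; linarith
      nlinarith
    rw [e1, e2]
    have key : x ^ 2 * Real.exp (α₀ * x + θ₁ * |x|) ≤ Cq * (1 + Real.exp ((α₀ + ε₀) * x)) := by
      rcases le_or_gt 0 x with hx | hx
      · rw [abs_of_nonneg hx]
        have h1 : x ^ 2 ≤ 4 / θ₁ ^ 2 * Real.exp (θ₁ * x) := sq_le_exp_aux hθ₁pos hx
        have h2 : x ^ 2 * Real.exp (α₀ * x + θ₁ * x)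
            ≤ 4 / θ₁ ^ 2 * Real.exp (θ₁ * x) * Real.exp (α₀ * x + θ₁ * x) :=
          mul_le_mul_of_nonneg_right h1 (Real.exp_pos _).le
        have h3 : Real.exp (θ₁ * x) * Real.exp (α₀ * x + θ₁ * x)
            = Real.exp (α₀ * x + 2 * θ₁ * x) := by
          rw [← Real.exp_add]; ring_nf
        have h4 : Real.exp (α₀ * x + 2 * θ₁ * x) ≤ Real.exp ((α₀ + ε₀) * x) :=
          Real.exp_le_exp.2 (by nlinarith)
        have h5 : 4 / θ₁ ^ 2 * Real.exp ((α₀ + ε₀) * x) ≤ Cq * (1 + Real.exp ((α₀ + ε₀) * x)) := by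
          simp only [hCqdef]; nlinarith
        calc x ^ 2 * Real.exp (α₀ * x + θ₁ * x)
            ≤ 4 / θ₁ ^ 2 * (Real.exp (θ₁ * x) * Real.exp (α₀ * x + θ₁ * x)) := by linarith
          _ = 4 / θ₁ ^ 2 * Real.exp (α₀ * x + 2 * θ₁ * x) := by rw [h3]
          _ ≤ 4 / θ₁ ^ 2 * Real.exp ((α₀ + ε₀) * x) := by nlinarith
          _ ≤ Cq * (1 + Real.exp ((α₀ + ε₀) * x)) := h5
      · rw [abs_of_neg hx]
        have h1 : (-x) ^ 2 ≤ 4 / d ^ 2 * Real.exp (d * (-x)) :=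
          sq_le_exp_aux hdpos (by linarith)
        have h2 : Real.exp (d * (-x)) * Real.exp (α₀ * x + θ₁ * (-x)) = 1 := by
          rw [← Real.exp_add]
          have : d * (-x) + (α₀ * x + θ₁ * (-x)) = 0 := by simp only [hddef]; ring
          rw [this, Real.exp_zero]
        have h3 : x ^ 2 * Real.exp (α₀ * x + θ₁ * (-x)) ≤ 4 / d ^ 2 := by
          have := mul_le_mul_of_nonneg_right h1 (Real.exp_pos (α₀ * x + θ₁ * (-x))).le
          calc x ^ 2 * Real.exp (α₀ * x + θ₁ * (-x))
              = (-x) ^ 2 * Real.exp (α₀ * x + θ₁ * (-x)) := by ring_nf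
            _ ≤ 4 / d ^ 2 * (Real.exp (d * (-x)) * Real.exp (α₀ * x + θ₁ * (-x))) := by
                nlinarith
            _ = 4 / d ^ 2 := by rw [h2, mul_one]
        simp only [hCqdef]; nlinarith
    exact key
  have hXEint : Integrable (fun ω => X [] ω * Real.exp (α₀ * X [] ω)) μ := by
    refine (hGint.add hQint).mono
      (((hXmeas []).mul ((hXmeas []).const_mul α₀).exp).aestronglyMeasurable) ?_
    filter_upwards with ω
    simp only [Pi.add_apply]
    set x := X [] ω with hxdef
    have h1 : |x| ≤ 1 + x ^ 2 := by nlinarith [sq_abs x, sq_nonneg (|x| - 1), abs_nonneg x]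
    have h2 : Real.exp (α₀ * x) ≤ Real.exp (α₀ * x + θ₁ * |x|) :=
      Real.exp_le_exp.2 (by nlinarith [abs_nonneg x])
    have hnn : 0 ≤ Real.exp (α₀ * x + θ₁ * |x|) + x ^ 2 * Real.exp (α₀ * x + θ₁ * |x|) := by
      positivity
    have e1 : ‖x * Real.exp (α₀ * x)‖ = |x| * Real.exp (α₀ * x) := by
      rw [Real.norm_eq_abs, abs_mul, abs_of_pos (Real.exp_pos _)]
    have e2 : ‖Real.exp (α₀ * x + θ₁ * |x|) + x ^ 2 * Real.exp (α₀ * x + θ₁ * |x|)‖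
        = Real.exp (α₀ * x + θ₁ * |x|) + x ^ 2 * Real.exp (α₀ * x + θ₁ * |x|) :=
      abs_of_nonneg hnn
    rw [e1, e2]
    calc |x| * Real.exp (α₀ * x)
        ≤ (1 + x ^ 2) * Real.exp (α₀ * x + θ₁ * |x|) := by
          apply mul_le_mul h1 h2 (Real.exp_pos _).le (by nlinarith [sq_nonneg x])
      _ = Real.exp (α₀ * x + θ₁ * |x|) + x ^ 2 * Real.exp (α₀ * x + θ₁ * |x|) := by ring
  set A : ℝ := ∫ ω, X [] ω * Real.exp (α₀ * X [] ω) ∂μ with hAdef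
  set K₂ : ℝ := ∫ ω, (X [] ω) ^ 2 * Real.exp (α₀ * X [] ω + θ₁ * |X [] ω|) ∂μ with hK₂def
  have hK₂0 : 0 ≤ K₂ := by
    rw [hK₂def]; exact integral_nonneg fun ω => by positivity
  -- quadratic estimate for the moment generating function
  have hquad : ∀ θ : ℝ, |θ| ≤ θ₁ →
      |(∫ ω, Real.exp ((α₀ + θ) * X [] ω) ∂μ) - (∫ ω, Real.exp (α₀ * X [] ω) ∂μ) - θ * A|
        ≤ θ ^ 2 * K₂ := by
    intro θ hθ
    obtain ⟨hθl, hθr⟩ := abs_le.1 hθ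
    have hι1 : Integrable (fun ω => Real.exp ((α₀ + θ) * X [] ω)) μ :=
      hint _ (by linarith) (by linarith)
    have hι0 : Integrable (fun ω => Real.exp (α₀ * X [] ω)) μ := hint _ hα₀.le (by linarith)
    have hdiff : (∫ ω, Real.exp ((α₀ + θ) * X [] ω) ∂μ)
          - (∫ ω, Real.exp (α₀ * X [] ω) ∂μ) - θ * A
        = ∫ ω, (Real.exp ((α₀ + θ) * X [] ω) - Real.exp (α₀ * X [] ω)
            - θ * (X [] ω * Real.exp (α₀ * X [] ω))) ∂μ := by
      have hFG : Integrable (fun ω => Real.exp ((α₀ + θ) * X [] ω)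
          - Real.exp (α₀ * X [] ω)) μ := hι1.sub hι0
      have hG2 : Integrable (fun ω => θ * (X [] ω * Real.exp (α₀ * X [] ω))) μ :=
        hXEint.const_mul θ
      have hstep1 : (∫ ω, (Real.exp ((α₀ + θ) * X [] ω) - Real.exp (α₀ * X [] ω)
            - θ * (X [] ω * Real.exp (α₀ * X [] ω))) ∂μ)
          = (∫ ω, (Real.exp ((α₀ + θ) * X [] ω) - Real.exp (α₀ * X [] ω)) ∂μ)
            - ∫ ω, θ * (X [] ω * Real.exp (α₀ * X [] ω)) ∂μ :=
        integral_sub hFG hG2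
      have hstep2 : (∫ ω, (Real.exp ((α₀ + θ) * X [] ω) - Real.exp (α₀ * X [] ω)) ∂μ)
          = (∫ ω, Real.exp ((α₀ + θ) * X [] ω) ∂μ) - ∫ ω, Real.exp (α₀ * X [] ω) ∂μ :=
        integral_sub hι1 hι0
      have hstep3 : (∫ ω, θ * (X [] ω * Real.exp (α₀ * X [] ω)) ∂μ) = θ * A := by
        rw [hAdef]; exact integral_const_mul θ _
      rw [hstep1, hstep2, hstep3]
    rw [hdiff]
    have hfint : Integrable (fun ω => Real.exp ((α₀ + θ) * X [] ω) - Real.exp (α₀ * X [] ω)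
        - θ * (X [] ω * Real.exp (α₀ * X [] ω))) μ := (hι1.sub hι0).sub (hXEint.const_mul θ)
    have hptw : ∀ ω, |Real.exp ((α₀ + θ) * X [] ω) - Real.exp (α₀ * X [] ω)
          - θ * (X [] ω * Real.exp (α₀ * X [] ω))|
        ≤ θ ^ 2 * ((X [] ω) ^ 2 * Real.exp (α₀ * X [] ω + θ₁ * |X [] ω|)) := by
      intro ω
      set x := X [] ω with hxdef
      have key : Real.exp ((α₀ + θ) * x) - Real.exp (α₀ * x) - θ * (x * Real.exp (α₀ * x))
          = Real.exp (α₀ * x) * (Real.exp (θ * x) - 1 - θ * x) := by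
        have : Real.exp (α₀ * x) * Real.exp (θ * x) = Real.exp ((α₀ + θ) * x) := by
          rw [← Real.exp_add]; ring_nf
        rw [mul_sub, mul_sub, this]; ring
      rw [key, abs_mul, abs_of_pos (Real.exp_pos _)]
      have h1 : |Real.exp (θ * x) - 1 - θ * x| ≤ (θ * x) ^ 2 * Real.exp |θ * x| :=
        abs_exp_sub_one_sub_le (θ * x)
      have h2 : Real.exp |θ * x| ≤ Real.exp (θ₁ * |x|) := by
        apply Real.exp_le_exp.2
        rw [abs_mul]
        exact mul_le_mul_of_nonneg_right hθ (abs_nonneg x)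
      have h3 : Real.exp (α₀ * x) * Real.exp (θ₁ * |x|) = Real.exp (α₀ * x + θ₁ * |x|) := by
        rw [← Real.exp_add]
      calc Real.exp (α₀ * x) * |Real.exp (θ * x) - 1 - θ * x|
          ≤ Real.exp (α₀ * x) * ((θ * x) ^ 2 * Real.exp (θ₁ * |x|)) := by
            refine mul_le_mul_of_nonneg_left ?_ (Real.exp_pos _).le
            exact h1.trans (mul_le_mul_of_nonneg_left h2 (sq_nonneg _))
        _ = θ ^ 2 * (x ^ 2 * (Real.exp (α₀ * x) * Real.exp (θ₁ * |x|))) := by ring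
        _ = θ ^ 2 * (x ^ 2 * Real.exp (α₀ * x + θ₁ * |x|)) := by rw [h3]
    calc |∫ ω, (Real.exp ((α₀ + θ) * X [] ω) - Real.exp (α₀ * X [] ω)
            - θ * (X [] ω * Real.exp (α₀ * X [] ω))) ∂μ|
        ≤ ∫ ω, |Real.exp ((α₀ + θ) * X [] ω) - Real.exp (α₀ * X [] ω)
            - θ * (X [] ω * Real.exp (α₀ * X [] ω))| ∂μ := by
          simpa [Real.norm_eq_abs] using norm_integral_le_integral_norm
            (μ := μ) (f := fun ω => Real.exp ((α₀ + θ) * X [] ω) - Real.exp (α₀ * X [] ω)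
              - θ * (X [] ω * Real.exp (α₀ * X [] ω)))
      _ ≤ ∫ ω, θ ^ 2 * ((X [] ω) ^ 2 * Real.exp (α₀ * X [] ω + θ₁ * |X [] ω|)) ∂μ :=
          integral_mono hfint.abs (hQint.const_mul _) hptw
      _ = θ ^ 2 * K₂ := by rw [hK₂def]; exact integral_const_mul _ _
  -- derivative of the moment generating function
  have hMd : HasDerivAt (fun s => ∫ ω, Real.exp (s * X [] ω) ∂μ) A α₀ := by
    rw [hasDerivAt_iff_isLittleO]
    have hO : (fun s => (∫ ω, Real.exp (s * X [] ω) ∂μ)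
          - (∫ ω, Real.exp (α₀ * X [] ω) ∂μ) - (s - α₀) • A)
        =O[nhds α₀] (fun s => (s - α₀) ^ 2) := by
      rw [Asymptotics.isBigO_iff]
      refine ⟨K₂, ?_⟩
      filter_upwards [Metric.ball_mem_nhds α₀ hθ₁pos] with s hs
      rw [Metric.mem_ball, Real.dist_eq] at hs
      have h := hquad (s - α₀) hs.le
      have hrw : α₀ + (s - α₀) = s := by ring
      rw [hrw] at h
      rw [Real.norm_eq_abs, Real.norm_eq_abs, smul_eq_mul]
      calc |(∫ ω, Real.exp (s * X [] ω) ∂μ) - (∫ ω, Real.exp (α₀ * X [] ω) ∂μ) - (s - α₀) * A|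
          ≤ (s - α₀) ^ 2 * K₂ := h
        _ ≤ K₂ * |(s - α₀) ^ 2| := by rw [abs_of_nonneg (sq_nonneg _)]; linarith
    have hlo : (fun s : ℝ => (s - α₀) ^ 2) =o[nhds α₀] (fun s => s - α₀) := by
      rw [Asymptotics.isLittleO_iff]
      intro c hc
      filter_upwards [Metric.ball_mem_nhds α₀ hc] with s hs
      rw [Metric.mem_ball, Real.dist_eq] at hs
      rw [Real.norm_eq_abs, Real.norm_eq_abs]
      have : |(s - α₀) ^ 2| = |s - α₀| * |s - α₀| := by rw [sq, abs_mul]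
      rw [this]
      exact mul_le_mul_of_nonneg_right hs.le (abs_nonneg _)
    exact hO.trans_isLittleO hlo
  have hMint0 : Integrable (fun ω => Real.exp (α₀ * X [] ω)) μ := hint _ hα₀.le (by linarith)
  have h1 : HasDerivAt (fun s => (N : ℝ) * ∫ ω, Real.exp (s * X [] ω) ∂μ) ((N : ℝ) * A) α₀ :=
    hMd.const_mul _
  have h2 : HasDerivAt (fun s => Real.log ((N : ℝ) * ∫ ω, Real.exp (s * X [] ω) ∂μ))
      ((N : ℝ) * A / ((N : ℝ) * ∫ ω, Real.exp (α₀ * X [] ω) ∂μ)) α₀ :=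
    h1.log (by rw [hψ1]; norm_num)
  rw [hψ1, div_one] at h2
  have hρA : ρ₀ = (N : ℝ) * A := hρ₀.unique h2
  set K : ℝ := (N : ℝ) * K₂ with hKdef
  have hK0 : 0 ≤ K := by rw [hKdef]; positivity
  -- positivity of ψ
  have hψpos : ∀ c : ℝ, 0 ≤ c → c ≤ α₀ + ε₀ →
      0 < (N : ℝ) * ∫ ω, Real.exp (c * X [] ω) ∂μ := by
    intro c hc0 hc1
    have : 0 < ∫ ω, Real.exp (c * X [] ω) ∂μ := integral_exp_pos (hint c hc0 hc1)
    positivity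
  -- upper bound on Ψ(α₀ + θ)
  have hub : ∀ θ : ℝ, 0 ≤ θ → θ ≤ θ₁ →
      Real.log ((N : ℝ) * ∫ ω, Real.exp ((α₀ + θ) * X [] ω) ∂μ) ≤ ρ₀ * θ + K * θ ^ 2 := by
    intro θ hθ0 hθ1
    have h := (abs_le.1 (hquad θ (by rw [abs_of_nonneg hθ0]; exact hθ1))).2
    have hMub : (∫ ω, Real.exp ((α₀ + θ) * X [] ω) ∂μ)
        ≤ (∫ ω, Real.exp (α₀ * X [] ω) ∂μ) + θ * A + θ ^ 2 * K₂ := by linarith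
    have hNub : (N : ℝ) * ∫ ω, Real.exp ((α₀ + θ) * X [] ω) ∂μ
        ≤ 1 + ρ₀ * θ + K * θ ^ 2 := by
      have := mul_le_mul_of_nonneg_left hMub hNpos.le
      rw [hρA, hKdef]
      nlinarith [hψ1]
    have hpos := hψpos (α₀ + θ) (by linarith) (by linarith)
    calc Real.log ((N : ℝ) * ∫ ω, Real.exp ((α₀ + θ) * X [] ω) ∂μ)
        ≤ (N : ℝ) * (∫ ω, Real.exp ((α₀ + θ) * X [] ω) ∂μ) - 1 :=
          Real.log_le_sub_one_of_pos hpos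
      _ ≤ ρ₀ * θ + K * θ ^ 2 := by linarith
  -- lower bound on Ψ(α₀ + θ) for small θ
  have hΨ0 : Real.log ((N : ℝ) * ∫ ω, Real.exp (α₀ * X [] ω) ∂μ) = 0 := by
    rw [hψ1, Real.log_one]
  obtain ⟨θ₀, hθ₀pos, hlb⟩ : ∃ θ₀ > (0 : ℝ), ∀ θ : ℝ, 0 < θ → θ ≤ θ₀ →
      ρ₀ * θ / 2 ≤ Real.log ((N : ℝ) * ∫ ω, Real.exp ((α₀ + θ) * X [] ω) ∂μ) := by
    have hslope := hasDerivAt_iff_tendsto_slope.1 hρ₀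
    have hev : ∀ᶠ s in nhdsWithin α₀ {α₀}ᶜ,
        ρ₀ / 2 < slope (fun s => Real.log ((N : ℝ) * ∫ ω, Real.exp (s * X [] ω) ∂μ)) α₀ s :=
      hslope.eventually (eventually_gt_nhds (by linarith))
    rw [eventually_nhdsWithin_iff, Metric.eventually_nhds_iff] at hev
    obtain ⟨r, hr, hball⟩ := hev
    refine ⟨r / 2, by linarith, ?_⟩
    intro θ hθ0 hθr
    have hd : dist (α₀ + θ) α₀ < r := by
      rw [Real.dist_eq]
      have : α₀ + θ - α₀ = θ := by ring
      rw [this, abs_of_pos hθ0]; linarith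
    have hne : (α₀ + θ) ∈ ({α₀}ᶜ : Set ℝ) := by
      simp only [Set.mem_compl_iff, Set.mem_singleton_iff]
      intro h; nlinarith [h]
    have hsl := hball hd hne
    rw [slope_def_field] at hsl
    rw [hΨ0] at hsl
    have harg : α₀ + θ - α₀ = θ := by ring
    rw [harg, sub_zero] at hsl
    have h2 : ρ₀ / 2 * θ < Real.log ((N : ℝ) * ∫ ω, Real.exp ((α₀ + θ) * X [] ω) ∂μ) := by
      have := (lt_div_iff₀ hθ0).1 hsl
      linarith
    linarith
  -- Chernoff bound along a fixed path
  have chern : ∀ s : ℝ, α₀ ≤ s → s ≤ α₀ + ε₀ → ∀ γ : List (Fin N), ∀ v : ℝ,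
      (μ {ω | v < S γ ω}).toReal
        ≤ Real.exp (-s * v) * (∫ ω, Real.exp (s * X [] ω) ∂μ) ^ γ.length := by
    intro s hs0 hs1 γ v
    have hsnn : 0 ≤ s := le_trans hα₀.le hs0
    set c0 : Fin N := ⟨0, Nat.lt_of_lt_of_le Nat.zero_lt_one hN⟩ with hc0def
    set g : ℕ → List (Fin N) :=
      fun k => γ.take (k + 1) ++ List.replicate (k + 1 - γ.length) c0 with hgdef
    have hglen : ∀ k, (g k).length = k + 1 := by
      intro k
      simp only [hgdef, List.length_append, List.length_take, List.length_replicate]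
      omega
    have hginj : Function.Injective g := by
      intro a b hab
      have h := congrArg List.length hab
      rw [hglen, hglen] at h
      omega
    have hgtake : ∀ k, k < γ.length → g k = γ.take (k + 1) := by
      intro k hk
      have h0 : k + 1 - γ.length = 0 := by omega
      simp [hgdef, h0]
    have hYindep : iIndepFun (fun k => X (g k)) μ :=
      iIndepFun_precomp hXindep hginj
    have hYmeas : ∀ k : ℕ, Measurable ((fun k => X (g k)) k) := fun k => hXmeas _
    have hexpmeas : Measurable (fun x : ℝ => Real.exp (s * x)) :=
      (measurable_id.const_mul s).exp
    have hint_each : ∀ k : ℕ, Integrable (fun ω => Real.exp (s * X (g k) ω)) μ := by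
      intro k
      have hid : IdentDistrib (fun ω => Real.exp (s * X (g k) ω))
          (fun ω => Real.exp (s * X [] ω)) μ μ := by
        have := (hXident (g k)).comp hexpmeas
        exact this
      exact hid.integrable_iff.2 (hint s hsnn hs1)
    have hSsum : S γ = ∑ k ∈ Finset.range γ.length, X (g k) := by
      funext ω
      rw [hS, Finset.sum_apply]
      refine Finset.sum_congr rfl fun k hk => ?_
      rw [hgtake k (Finset.mem_range.1 hk)]
    have hint_sum : Integrable
        (fun ω => Real.exp (s * (∑ k ∈ Finset.range γ.length, fun ω' => X (g k) ω') ω)) μ :=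
      hYindep.integrable_exp_mul_sum hYmeas fun i _ => hint_each i
    have hch := measure_ge_le_exp_mul_mgf (μ := μ)
      (X := ∑ k ∈ Finset.range γ.length, fun ω' => X (g k) ω') v hsnn hint_sum
    have hmgf : mgf (∑ k ∈ Finset.range γ.length, fun ω' => X (g k) ω') μ s
        = (∫ ω, Real.exp (s * X [] ω) ∂μ) ^ γ.length := by
      rw [hYindep.mgf_sum hYmeas]
      have heach : ∀ k : ℕ, mgf (X (g k)) μ s = ∫ ω, Real.exp (s * X [] ω) ∂μ := by
        intro k
        have hid := (hXident (g k)).comp hexpmeas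
        have h := hid.integral_eq
        simpa [ProbabilityTheory.mgf, Function.comp] using h
      calc ∏ k ∈ Finset.range γ.length, mgf (X (g k)) μ s
          = ∏ _k ∈ Finset.range γ.length, ∫ ω, Real.exp (s * X [] ω) ∂μ :=
            Finset.prod_congr rfl fun k _ => heach k
        _ = (∫ ω, Real.exp (s * X [] ω) ∂μ) ^ γ.length := by
            rw [Finset.prod_const, Finset.card_range]
    have hfuneq : (∑ k ∈ Finset.range γ.length, fun ω' => X (g k) ω') = S γ := by
      rw [hSsum]
    have hsub : μ {ω | v < S γ ω}
        ≤ μ {ω | v ≤ (∑ k ∈ Finset.range γ.length, fun ω' => X (g k) ω') ω} := by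
      apply measure_mono
      intro ω hω
      have h1 : v < S γ ω := hω
      rw [← hfuneq] at h1
      exact h1.le
    calc (μ {ω | v < S γ ω}).toReal
        ≤ (μ {ω | v ≤ (∑ k ∈ Finset.range γ.length, fun ω' => X (g k) ω') ω}).toReal :=
          ENNReal.toReal_mono (measure_ne_top μ _) hsub
      _ ≤ Real.exp (-s * v)
            * mgf (∑ k ∈ Finset.range γ.length, fun ω' => X (g k) ω') μ s := hch
      _ = Real.exp (-s * v) * (∫ ω, Real.exp (s * X [] ω) ∂μ) ^ γ.length := by rw [hmgf]
  -- the constants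
  set b : ℝ := 2 / ρ₀ * (K + 2 + δ) with hbdef
  have hbpos : 0 < b := by
    rw [hbdef]
    apply mul_pos (by positivity)
    linarith
  set C : ℝ := ρ₀ ^ ((1 : ℝ) + δ) with hCdef
  have hCpos : 0 < C := Real.rpow_pos_of_pos hρ₀pos _
  -- eventual conditions
  have htop : Filter.Tendsto (fun u : ℝ => u / ρ₀) Filter.atTop Filter.atTop :=
    Filter.Tendsto.atTop_div_const hρ₀pos Filter.tendsto_id
  have hlogtop : Filter.Tendsto (fun u : ℝ => Real.log (u / ρ₀)) Filter.atTop Filter.atTop :=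
    Real.tendsto_log_atTop.comp htop
  have hratio : Filter.Tendsto (fun u : ℝ => Real.log (u / ρ₀) / (u / ρ₀))
      Filter.atTop (nhds 0) := by
    have h0 : Filter.Tendsto (fun x : ℝ => Real.log x / x) Filter.atTop (nhds 0) := by
      have := Real.isLittleO_log_id_atTop.tendsto_div_nhds_zero
      simpa using this
    exact h0.comp htop
  have hsqrt : Filter.Tendsto (fun u : ℝ => Real.sqrt (Real.log (u / ρ₀) / (u / ρ₀)))
      Filter.atTop (nhds 0) := by
    have hc := Real.continuous_sqrt.tendsto 0
    rw [Real.sqrt_zero] at hc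
    exact hc.comp hratio
  set θmax : ℝ := min θ₀ θ₁ with hθmaxdef
  have hθmaxpos : 0 < θmax := lt_min hθ₀pos hθ₁pos
  have hev : ∀ᶠ u : ℝ in Filter.atTop, 1 ≤ u ∧ 3 ≤ u / ρ₀ ∧ 1 ≤ Real.log (u / ρ₀)
      ∧ Real.sqrt (Real.log (u / ρ₀) / (u / ρ₀)) ≤ θmax
      ∧ b * Real.sqrt (Real.log (u / ρ₀) / (u / ρ₀)) ≤ 1 / 2 := by
    have e4 : ∀ᶠ u : ℝ in Filter.atTop,
        Real.sqrt (Real.log (u / ρ₀) / (u / ρ₀)) ≤ θmax :=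
      (hsqrt.eventually_lt_const hθmaxpos).mono fun x hx => hx.le
    have e5 : ∀ᶠ u : ℝ in Filter.atTop,
        b * Real.sqrt (Real.log (u / ρ₀) / (u / ρ₀)) ≤ 1 / 2 := by
      have hbs : Filter.Tendsto
          (fun u : ℝ => b * Real.sqrt (Real.log (u / ρ₀) / (u / ρ₀)))
          Filter.atTop (nhds (b * 0)) := hsqrt.const_mul b
      rw [mul_zero] at hbs
      exact (hbs.eventually_lt_const (by norm_num)).mono fun x hx => hx.le
    exact (Filter.eventually_ge_atTop 1).and ((htop.eventually_ge_atTop 3).and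
      ((hlogtop.eventually_ge_atTop 1).and (e4.and e5)))
  obtain ⟨u₀, hu₀⟩ := Filter.eventually_atTop.1 hev
  refine ⟨b, hbpos, C, hCpos, u₀, ?_⟩
  intro u hu
  obtain ⟨hu1, hn3, hL1, hθle, hbθ⟩ := hu₀ u hu
  set n : ℝ := u / ρ₀ with hndef
  set L : ℝ := Real.log n with hLdef
  set θ : ℝ := Real.sqrt (L / n) with hθdef
  set m : ℝ := b * Real.sqrt (n * L) with hmdef
  have hnpos : 0 < n := by linarith
  have hLpos : 0 < L := by linarith
  have hθpos : 0 < θ := Real.sqrt_pos.2 (div_pos hLpos hnpos)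
  have hθsq : θ ^ 2 = L / n := Real.sq_sqrt (le_of_lt (div_pos hLpos hnpos))
  have hθθ₀ : θ ≤ θ₀ := le_trans hθle (min_le_left _ _)
  have hθθ₁ : θ ≤ θ₁ := le_trans hθle (min_le_right _ _)
  have hθε : θ ≤ ε₀ := by linarith
  have hmθ : m * θ = b * L := by
    rw [hmdef, hθdef, mul_assoc, ← Real.sqrt_mul (by positivity : (0:ℝ) ≤ n * L)]
    have hh : n * L * (L / n) = L ^ 2 := by
      field_simp
    rw [hh, Real.sqrt_sq hLpos.le]
  have hsqnL : Real.sqrt (n * L) = n * θ := by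
    have h1 : n * Real.sqrt (L / n) = Real.sqrt (n ^ 2 * (L / n)) := by
      rw [Real.sqrt_mul (by positivity), Real.sqrt_sq hnpos.le]
    have h2 : n ^ 2 * (L / n) = n * L := by
      field_simp
    rw [hθdef, h1, h2]
  have hmn : m ≤ n / 2 := by
    rw [hmdef, hsqnL]
    calc b * (n * θ) = n * (b * θ) := by ring
      _ ≤ n * (1 / 2) := mul_le_mul_of_nonneg_left hbθ hnpos.le
      _ = n / 2 := by ring
  have hm0 : 0 ≤ m := by rw [hmdef]; positivity
  have hr1 : 1 ≤ n - m := by linarith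
  set Km : ℕ := ⌊n - m⌋₊ with hKmdef
  have hKmle : (Km : ℝ) ≤ n - m := Nat.floor_le (by linarith)
  have hKmn : (Km : ℝ) ≤ n := by linarith
  -- bounds at the tilt point
  set Ms : ℝ := ∫ ω, Real.exp ((α₀ + θ) * X [] ω) ∂μ with hMsdef
  have hΨub := hub θ hθpos.le hθθ₁
  have hΨlb := hlb θ hθpos hθθ₀
  have hψspos : 0 < (N : ℝ) * Ms := hψpos _ (by linarith) (by linarith)
  have hΨs0 : 0 ≤ Real.log ((N : ℝ) * Ms) :=
    le_trans (by positivity) hΨlb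
  have hψs1 : 1 ≤ (N : ℝ) * Ms := by
    have h := Real.one_le_exp hΨs0
    rwa [Real.exp_log hψspos] at h
  -- union bound
  have hEsub : {ω | ∃ γ : List (Fin N), 1 ≤ γ.length ∧ (γ.length : ℝ) ≤ n - m ∧ u < S γ ω}
      ⊆ ⋃ k ∈ Finset.Icc 1 Km, ⋃ f : Fin k → Fin N, {ω | u < S (List.ofFn f) ω} := by
    rintro ω ⟨γ, hγ1, hγ2, hγ3⟩
    have hkm : γ.length ∈ Finset.Icc 1 Km := by
      rw [Finset.mem_Icc]
      exact ⟨hγ1, Nat.le_floor hγ2⟩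
    refine Set.mem_iUnion.2 ⟨γ.length, Set.mem_iUnion.2 ⟨hkm, ?_⟩⟩
    refine Set.mem_iUnion.2 ⟨fun i => γ.get i, ?_⟩
    simpa [List.ofFn_get] using hγ3
  have hmeasbound : μ {ω | ∃ γ : List (Fin N), 1 ≤ γ.length ∧ (γ.length : ℝ) ≤ n - m
        ∧ u < S γ ω}
      ≤ ∑ k ∈ Finset.Icc 1 Km, ∑ f : Fin k → Fin N, μ {ω | u < S (List.ofFn f) ω} := by
    refine le_trans (measure_mono hEsub) ?_
    refine le_trans (measure_biUnion_finset_le _ _) ?_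
    exact Finset.sum_le_sum fun k _ => measure_iUnion_fintype_le _ _
  have htot' : (μ {ω | ∃ γ : List (Fin N), 1 ≤ γ.length ∧ (γ.length : ℝ) ≤ n - m
        ∧ u < S γ ω}).toReal
      ≤ ∑ k ∈ Finset.Icc 1 Km, ∑ f : Fin k → Fin N,
          (μ {ω | u < S (List.ofFn f) ω}).toReal := by
    have hfin : (∑ k ∈ Finset.Icc 1 Km, ∑ f : Fin k → Fin N,
        μ {ω | u < S (List.ofFn f) ω}) ≠ ⊤ := by
      refine (ENNReal.sum_lt_top.2 fun k _ => ?_).ne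
      exact ENNReal.sum_lt_top.2 fun f _ => measure_lt_top μ _
    refine le_trans (ENNReal.toReal_mono hfin hmeasbound) (le_of_eq ?_)
    rw [ENNReal.toReal_sum fun k _ => ?_]
    · refine Finset.sum_congr rfl fun k _ => ?_
      rw [ENNReal.toReal_sum fun f _ => measure_ne_top μ _]
    · exact (ENNReal.sum_lt_top.2 fun f _ => measure_lt_top μ _).ne
  have hstep : ∀ k ∈ Finset.Icc 1 Km,
      (∑ f : Fin k → Fin N, (μ {ω | u < S (List.ofFn f) ω}).toReal)
        ≤ ((N : ℝ) * Ms) ^ k * Real.exp (-(α₀ + θ) * u) := by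
    intro k _
    have hcard : (Finset.univ : Finset (Fin k → Fin N)).card = N ^ k := by
      rw [Finset.card_univ, Fintype.card_fun, Fintype.card_fin, Fintype.card_fin]
    calc (∑ f : Fin k → Fin N, (μ {ω | u < S (List.ofFn f) ω}).toReal)
        ≤ ∑ _f : Fin k → Fin N, Real.exp (-(α₀ + θ) * u) * Ms ^ k := by
          refine Finset.sum_le_sum fun f _ => ?_
          have h := chern (α₀ + θ) (by linarith) (by linarith) (List.ofFn f) u
          simpa [List.length_ofFn, hMsdef] using h
      _ = ((N : ℝ) ^ k) * (Real.exp (-(α₀ + θ) * u) * Ms ^ k) := by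
          rw [Finset.sum_const, hcard, nsmul_eq_mul]
          push_cast
          ring
      _ = ((N : ℝ) * Ms) ^ k * Real.exp (-(α₀ + θ) * u) := by
          rw [mul_pow]
          ring
  have hpowmono : ∀ k ∈ Finset.Icc 1 Km, ((N : ℝ) * Ms) ^ k ≤ ((N : ℝ) * Ms) ^ Km :=
    fun k hk => pow_le_pow_right₀ hψs1 (Finset.mem_Icc.1 hk).2
  have hsum : (μ {ω | ∃ γ : List (Fin N), 1 ≤ γ.length ∧ (γ.length : ℝ) ≤ n - m
        ∧ u < S γ ω}).toReal
      ≤ (Km : ℝ) * (((N : ℝ) * Ms) ^ Km * Real.exp (-(α₀ + θ) * u)) := by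
    refine le_trans htot' ?_
    calc (∑ k ∈ Finset.Icc 1 Km, ∑ f : Fin k → Fin N,
          (μ {ω | u < S (List.ofFn f) ω}).toReal)
        ≤ ∑ k ∈ Finset.Icc 1 Km, ((N : ℝ) * Ms) ^ k * Real.exp (-(α₀ + θ) * u) :=
          Finset.sum_le_sum hstep
      _ ≤ ∑ _k ∈ Finset.Icc 1 Km, ((N : ℝ) * Ms) ^ Km * Real.exp (-(α₀ + θ) * u) :=
          Finset.sum_le_sum fun k hk =>
            mul_le_mul_of_nonneg_right (hpowmono k hk) (Real.exp_pos _).le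
      _ = ((Finset.Icc 1 Km).card : ℝ) * (((N : ℝ) * Ms) ^ Km * Real.exp (-(α₀ + θ) * u)) := by
          rw [Finset.sum_const, nsmul_eq_mul]
      _ ≤ (Km : ℝ) * (((N : ℝ) * Ms) ^ Km * Real.exp (-(α₀ + θ) * u)) := by
          have hcard : (Finset.Icc 1 Km).card = Km := by
            rw [Nat.card_Icc]
            omega
          rw [hcard]
  -- exponent computation
  have hpowexp : ((N : ℝ) * Ms) ^ Km
      = Real.exp ((Km : ℝ) * Real.log ((N : ℝ) * Ms)) := by
    rw [← Real.exp_log hψspos, ← Real.exp_nat_mul, Real.exp_log hψspos]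
  have hun : u = ρ₀ * n := by
    rw [hndef]
    field_simp
  have hnθ2 : n * θ ^ 2 = L := by
    rw [hθsq]
    field_simp
  have hexp1 : (Km : ℝ) * Real.log ((N : ℝ) * Ms) ≤ (n - m) * Real.log ((N : ℝ) * Ms) :=
    mul_le_mul_of_nonneg_right hKmle hΨs0
  have hbval : ρ₀ / 2 * b = K + 2 + δ := by
    rw [hbdef]
    field_simp
  have hexpo : -(α₀ + θ) * u + (n - m) * Real.log ((N : ℝ) * Ms)
      ≤ -α₀ * u - (2 + δ) * L := by
    have h2 : n * Real.log ((N : ℝ) * Ms) ≤ n * (ρ₀ * θ + K * θ ^ 2) :=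
      mul_le_mul_of_nonneg_left hΨub hnpos.le
    have h3 : m * (ρ₀ * θ / 2) ≤ m * Real.log ((N : ℝ) * Ms) :=
      mul_le_mul_of_nonneg_left hΨlb hm0
    have h4 : n * (ρ₀ * θ + K * θ ^ 2) = ρ₀ * θ * n + K * L := by
      calc n * (ρ₀ * θ + K * θ ^ 2) = ρ₀ * θ * n + K * (n * θ ^ 2) := by ring
        _ = ρ₀ * θ * n + K * L := by rw [hnθ2]
    have h6 : θ * u = ρ₀ * θ * n := by rw [hun]; ring
    have h7 : m * (ρ₀ * θ / 2) = (K + 2 + δ) * L := by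
      calc m * (ρ₀ * θ / 2) = ρ₀ / 2 * (m * θ) := by ring
        _ = ρ₀ / 2 * (b * L) := by rw [hmθ]
        _ = (ρ₀ / 2 * b) * L := by ring
        _ = (K + 2 + δ) * L := by rw [hbval]
    have h8 : -(α₀ + θ) * u + (n - m) * Real.log ((N : ℝ) * Ms)
        = -α₀ * u - θ * u + n * Real.log ((N : ℝ) * Ms)
          - m * Real.log ((N : ℝ) * Ms) := by ring
    rw [h8]
    linarith
  -- assembling everything
  have hfinal1 : (μ {ω | ∃ γ : List (Fin N), 1 ≤ γ.length ∧ (γ.length : ℝ) ≤ n - m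
        ∧ u < S γ ω}).toReal
      ≤ n * Real.exp (-α₀ * u - (2 + δ) * L) := by
    refine le_trans hsum ?_
    calc (Km : ℝ) * (((N : ℝ) * Ms) ^ Km * Real.exp (-(α₀ + θ) * u))
        = (Km : ℝ) * Real.exp ((Km : ℝ) * Real.log ((N : ℝ) * Ms) + -(α₀ + θ) * u) := by
          rw [hpowexp, ← Real.exp_add]
      _ ≤ n * Real.exp (-(α₀ + θ) * u + (n - m) * Real.log ((N : ℝ) * Ms)) := by
          refine mul_le_mul hKmn (Real.exp_le_exp.2 (by linarith)) (Real.exp_pos _).le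
            hnpos.le
      _ ≤ n * Real.exp (-α₀ * u - (2 + δ) * L) :=
          mul_le_mul_of_nonneg_left (Real.exp_le_exp.2 hexpo) hnpos.le
  have hnexp : n = Real.exp L := (Real.exp_log hnpos).symm
  have h9 : n * Real.exp (-α₀ * u - (2 + δ) * L)
      = Real.exp (-α₀ * u) * Real.exp (-(1 + δ) * L) := by
    rw [hnexp, ← Real.exp_add, ← Real.exp_add]
    congr 1
    ring
  have h10 : Real.exp (-(1 + δ) * L) = n ^ (-(1 + δ) : ℝ) := by
    rw [Real.rpow_def_of_pos hnpos, hLdef]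
    congr 1
    ring
  have h11 : n ^ (-(1 + δ) : ℝ) ≤ C * u ^ (-δ) := by
    have hu0 : 0 < u := by linarith
    have h12 : n ^ (-(1 + δ) : ℝ) = u ^ (-(1 + δ) : ℝ) * ρ₀ ^ ((1 : ℝ) + δ) := by
      rw [hndef, Real.div_rpow hu0.le hρ₀pos.le, Real.rpow_neg hρ₀pos.le, div_eq_mul_inv,
        inv_inv]
    have h13 : u ^ (-(1 + δ) : ℝ) ≤ u ^ (-δ : ℝ) :=
      Real.rpow_le_rpow_of_exponent_le hu1 (by linarith)
    rw [h12, hCdef]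
    calc u ^ (-(1 + δ) : ℝ) * ρ₀ ^ ((1 : ℝ) + δ)
        ≤ u ^ (-δ : ℝ) * ρ₀ ^ ((1 : ℝ) + δ) :=
          mul_le_mul_of_nonneg_right h13 (Real.rpow_nonneg hρ₀pos.le _)
      _ = ρ₀ ^ ((1 : ℝ) + δ) * u ^ (-δ : ℝ) := by ring
  calc (μ {ω | ∃ γ : List (Fin N), 1 ≤ γ.length ∧ (γ.length : ℝ) ≤ n - m
        ∧ u < S γ ω}).toReal
      ≤ n * Real.exp (-α₀ * u - (2 + δ) * L) := hfinal1
    _ = Real.exp (-α₀ * u) * (n ^ (-(1 + δ) : ℝ)) := by rw [h9, h10]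
    _ ≤ Real.exp (-α₀ * u) * (C * u ^ (-δ)) :=
        mul_le_mul_of_nonneg_left h11 (Real.exp_pos _).le
    _ = C * Real.exp (-α₀ * u) * u ^ (-δ) := by ring
end
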